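/- Iterated global normal form (Corollary 5.4): With the notation of the one-step normal form, for every n ≥ 1, every w ∈ W, every function φ : ℝ → ℂ, and every point x at which both sides are defined: (L_{w_{0,n}} φ)(x) = e^{(i/ħ)𝒱_{w_{0,n}}(x_w)} · (T̂_{L^n(w)} (D̂_{J_{w_{0,n}}(x_w)} (T̂_w^{−1} φ)))(x), where L_{w_{0,n}} := L_{w_{n−1},w_n} ∘ ⋯ ∘ L_{w_0,w_1} is the composition of transfer-operator components along the word, 𝒱_{w_{0,n}}(x_w) := ∑_{k=1}^{n} 𝒱(φ_{w_{0,k}}(x_w)) is the Birkhoff sum, and J_{w_{0,n}}(x_w) := −log (φ_{w_{0,n}})'(x_w). -/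

import Mathlib

open Set

/-- Bi-infinite admissible words. -/
def Wbi (N : ℕ) (adj : Fin N → Fin N → Prop) : Type :=
  {w : ℤ → Fin N // ∀ l : ℤ, adj (w l) (w (l + 1))}

/-- The left shift `L` on bi-infinite admissible words. -/
def Lshift {N : ℕ} {adj : Fin N → Fin N → Prop} (w : Wbi N adj) : Wbi N adj :=
  ⟨fun l => w.1 (l + 1), fun l => w.2 (l + 1)⟩

/-- Forward composition `φ_{w_{0,k}} = φ_{w_{k−1},w_k} ∘ ⋯ ∘ φ_{w_0,w_1}`. -/
def compFwdZ {N : ℕ} (φm : Fin N → Fin N → ℝ → ℝ) (w : ℤ → Fin N) : ℕ → ℝ → ℝ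
  | 0 => id
  | k + 1 => φm (w (k : ℤ)) (w ((k : ℤ) + 1)) ∘ compFwdZ φm w k

/-- `J_{w_{0,n}}(x_w) := −log (φ_{w_{0,n}})'(x_w)`. -/
noncomputable def birkJ {N : ℕ} {adj : Fin N → Fin N → Prop}
    (φm : Fin N → Fin N → ℝ → ℝ) (X : Wbi N adj → ℝ) (w : Wbi N adj) (n : ℕ) : ℝ :=
  -Real.log (deriv (compFwdZ φm w.1 n) (X w))

/-- One component of the transfer operator:
`(L_{i,j} f)(x) := e^{(i/ħ)𝒱(x)} f(φ_{i,j}^{−1}(x))`. -/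
noncomputable def Lop (h : ℝ) (𝒱 : ℝ → ℂ) (φij : ℝ → ℝ) (f : ℝ → ℂ) (x : ℝ) : ℂ :=
  Complex.exp (Complex.I / (h : ℂ) * 𝒱 x) * f (Function.invFun φij x)

/-- Composition `L_{w_{0,n}} := L_{w_{n−1},w_n} ∘ ⋯ ∘ L_{w_0,w_1}` of
transfer-operator components along a word. -/
noncomputable def Lcomp {N : ℕ} (h : ℝ) (𝒱 : ℝ → ℂ) (φm : Fin N → Fin N → ℝ → ℝ)
    (w : ℤ → Fin N) : ℕ → (ℝ → ℂ) → ℝ → ℂ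
  | 0, f => f
  | n + 1, f => Lop h 𝒱 (φm (w (n : ℤ)) (w ((n : ℤ) + 1))) (Lcomp h 𝒱 φm w n f)

/-- The elementary FIO `(T̂_w f)(y) := e^{(i/ħ)Υ_w(y)} f(H_w^{−1}(y − x_w))`. -/
noncomputable def Tfio (h : ℝ) (Υw : ℝ → ℂ) (Hinvw : ℝ → ℝ) (xw : ℝ)
    (f : ℝ → ℂ) (y : ℝ) : ℂ :=
  Complex.exp (Complex.I / (h : ℂ) * Υw y) * f (Hinvw (y - xw))

/-- The inverse FIO `(T̂_w^{-1} f)(z) := e^{−(i/ħ)Υ_w(x_w + H_w(z))} f(x_w + H_w(z))`. -/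
noncomputable def TfioInv (h : ℝ) (Υw : ℝ → ℂ) (Hw : ℝ → ℝ) (xw : ℝ)
    (f : ℝ → ℂ) (z : ℝ) : ℂ :=
  Complex.exp (-(Complex.I / (h : ℂ)) * Υw (xw + Hw z)) * f (xw + Hw z)

/-- The dilation operator `(D̂_λ g)(y) := g(e^λ y)`. -/
noncomputable def Dil (lam : ℝ) (g : ℝ → ℂ) (y : ℝ) : ℂ := g (Real.exp lam * y)

/-- **Iterated global normal form** (Corollary 5.4). For every `n ≥ 1` the
iterated transfer operator along a word satisfies
`(L_{w_{0,n}} φ)(x) = e^{(i/ħ)𝒱_{w_{0,n}}(x_w)}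
(T̂_{L^n(w)} D̂_{J_{w_{0,n}}(x_w)} T̂_w^{−1} φ)(x)` at every admissible point
`x = x_{L^n(w)} + H_{L^n(w)}(e^{−J_{w_{0,n}}(x_w)} z)`, `z ∈ 𝒥`, where
`𝒱_{w_{0,n}}(x_w) = ∑_{k=1}^n 𝒱(φ_{w_{0,k}}(x_w))` is the Birkhoff sum. -/
theorem iterated_normal_form
    {N : ℕ} (hN : 1 ≤ N)
    (I : Fin N → Set ℝ)
    (hIcc : ∀ i, ∃ a b : ℝ, a ≤ b ∧ I i = Set.Icc a b)
    (hIdisj : ∀ i j, i ≠ j → Disjoint (I i) (I j))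
    (adj : Fin N → Fin N → Prop)
    (htrans : ∃ T : ℕ, 0 < T ∧ ∀ i j, ∃ p : ℕ → Fin N,
      p 0 = i ∧ p T = j ∧ ∀ k < T, adj (p k) (p (k + 1)))
    (φm : Fin N → Fin N → ℝ → ℝ)
    (θ : ℝ) (hθ0 : 0 < θ) (hθ1 : θ < 1)
    (hsmooth : ∀ i j, adj i j → ContDiff ℝ (⊤ : ℕ∞) (φm i j))
    (hcontr : ∀ i j, adj i j → ∀ x ∈ I i, 0 < deriv (φm i j) x ∧ deriv (φm i j) x ≤ θ)
    (hinto : ∀ i j, adj i j → φm i j '' I i ⊆ interior (I j))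
    (hsep : ∀ i j k l, adj i j → adj k l → (i, j) ≠ (k, l) →
      Disjoint (φm i j '' I i) (φm k l '' I k))
    (hinj : ∀ i j, adj i j → Function.Injective (φm i j))
    (h : ℝ) (hh : 0 < h)
    (τ : ℝ → ℝ) (hτ : ContDiff ℝ (⊤ : ℕ∞) τ)
    (V : ℝ → ℂ) (hV : ContDiff ℝ (⊤ : ℕ∞) V)
    (𝒱 : ℝ → ℂ) (h𝒱 : ∀ x, 𝒱 x = (τ x : ℂ) - Complex.I * h * V x)
    (X : Wbi N adj → ℝ)
    (hXmem : ∀ w : Wbi N adj, X w ∈ I (w.1 0))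
    (hXshift : ∀ w : Wbi N adj, X (Lshift w) = φm (w.1 0) (w.1 1) (X w))
    (Υ : Wbi N adj → ℝ → ℂ)
    (hΥhom : ∀ w : Wbi N adj, ∀ y ∈ I (w.1 0),
      Υ (Lshift w) (φm (w.1 0) (w.1 1) y) =
        Υ w y + 𝒱 (φm (w.1 0) (w.1 1) y) - 𝒱 (X (Lshift w)))
    (ε : ℝ) (hε : 0 < ε)
    (H Hinv : Wbi N adj → ℝ → ℝ)
    (hH0 : ∀ w, H w 0 = 0) (hH1 : ∀ w, deriv (H w) 0 = 1)
    (hHinv : ∀ w : Wbi N adj, ∀ z ∈ Set.Ioo (-ε) ε, Hinv w (H w z) = z)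
    (hconj : ∀ w : Wbi N adj, ∀ z ∈ Set.Ioo (-ε) ε,
      H (Lshift w) (Real.exp (-(birkJ φm X w 1)) * z) =
        φm (w.1 0) (w.1 1) (H w z + X w) - X (Lshift w)) :
    ∀ w : Wbi N adj, ∀ n : ℕ, 1 ≤ n → ∀ φfun : ℝ → ℂ, ∀ z : ℝ,
      (∀ k : ℕ, k ≤ n →
        Real.exp (-(birkJ φm X w k)) * z ∈ Set.Ioo (-ε) ε ∧
        X (Lshift^[k] w) + H (Lshift^[k] w) (Real.exp (-(birkJ φm X w k)) * z) ∈
          I (w.1 (k : ℤ))) →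
      Lcomp h 𝒱 φm w.1 n φfun
          (X (Lshift^[n] w) + H (Lshift^[n] w) (Real.exp (-(birkJ φm X w n)) * z)) =
        Complex.exp (Complex.I / (h : ℂ) *
            ∑ k ∈ Finset.range n, 𝒱 (compFwdZ φm w.1 (k + 1) (X w))) *
          Tfio h (Υ (Lshift^[n] w)) (Hinv (Lshift^[n] w)) (X (Lshift^[n] w))
            (Dil (birkJ φm X w n) (TfioInv h (Υ w) (H w) (X w) φfun))
            (X (Lshift^[n] w) + H (Lshift^[n] w) (Real.exp (-(birkJ φm X w n)) * z)) := by
  intro w n _hn φfun z hyp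
  -- index of iterated shift
  have L1 : ∀ (v : Wbi N adj) (k : ℕ) (l : ℤ), (Lshift^[k] v).1 l = v.1 (l + k) := by
    intro v k
    induction k generalizing v with
    | zero => intro l; simp
    | succ k ih =>
      intro l
      rw [Function.iterate_succ_apply, ih (Lshift v) l]
      show v.1 (l + k + 1) = v.1 (l + (k + 1 : ℕ))
      congr 1
      push_cast
      ring
  -- coded points
  have L2 : ∀ (v : Wbi N adj) (k : ℕ), X (Lshift^[k] v) = compFwdZ φm v.1 k (X v) := by
    intro v k
    induction k with
    | zero => rfl
    | succ k ih =>
      rw [Function.iterate_succ_apply', hXshift, L1 v k 0, L1 v k 1, ih]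
      show φm (v.1 (0 + k)) (v.1 (1 + k)) _ = φm (v.1 (k : ℤ)) (v.1 ((k : ℤ) + 1)) _
      rw [zero_add, add_comm (1 : ℤ) (k : ℤ)]
  have memI : ∀ (v : Wbi N adj) (k : ℕ), X (Lshift^[k] v) ∈ I (v.1 k) := by
    intro v k
    have := hXmem (Lshift^[k] v)
    rwa [L1, zero_add] at this
  -- smoothness of compositions
  have contD : ∀ (v : Wbi N adj) (k : ℕ), ContDiff ℝ (⊤ : ℕ∞) (compFwdZ φm v.1 k) := by
    intro v k
    induction k with
    | zero => exact contDiff_id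
    | succ k ih => exact (hsmooth _ _ (v.2 k)).comp ih
  -- derivative recursion
  have derivRec : ∀ (v : Wbi N adj) (k : ℕ),
      deriv (compFwdZ φm v.1 (k + 1)) (X v) =
        deriv (φm (v.1 (k : ℤ)) (v.1 ((k : ℤ) + 1))) (X (Lshift^[k] v)) *
          deriv (compFwdZ φm v.1 k) (X v) := by
    intro v k
    have hc : compFwdZ φm v.1 (k + 1) =
        (φm (v.1 (k : ℤ)) (v.1 ((k : ℤ) + 1))) ∘ compFwdZ φm v.1 k := rfl
    rw [hc, deriv_comp _ (((hsmooth _ _ (v.2 k)).differentiable (by simp)).differentiableAt)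
      (((contD v k).differentiable (by simp)).differentiableAt), L2]
  -- positivity of derivatives
  have Dpos : ∀ (v : Wbi N adj) (k : ℕ), 0 < deriv (compFwdZ φm v.1 k) (X v) := by
    intro v k
    induction k with
    | zero =>
      show (0 : ℝ) < deriv id (X v)
      simp
    | succ k ih =>
      rw [derivRec v k]
      exact mul_pos ((hcontr _ _ (v.2 k) _ (memI v k)).1) ih
  have expJ : ∀ (v : Wbi N adj) (k : ℕ),
      Real.exp (-(birkJ φm X v k)) = deriv (compFwdZ φm v.1 k) (X v) := by
    intro v k
    unfold birkJ
    rw [neg_neg, Real.exp_log (Dpos v k)]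
  have expJ1 : ∀ (v : Wbi N adj),
      Real.exp (-(birkJ φm X v 1)) = deriv (φm (v.1 0) (v.1 1)) (X v) := by
    intro v
    rw [expJ]
    have hc : compFwdZ φm v.1 1 = φm (v.1 0) (v.1 1) := by
      show φm (v.1 (0 : ℤ)) (v.1 ((0 : ℤ) + 1)) ∘ id = _
      rw [zero_add]
      rfl
    rw [hc]
  have stepJ : ∀ (k : ℕ),
      Real.exp (-(birkJ φm X w (k + 1))) =
        Real.exp (-(birkJ φm X (Lshift^[k] w) 1)) * Real.exp (-(birkJ φm X w k)) := by
    intro k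
    rw [expJ, expJ1, expJ, derivRec w k, L1 w k 0, L1 w k 1, zero_add,
      add_comm (1 : ℤ) (k : ℤ)]
  -- main claim for all n (including n = 0), fully evaluated
  have main : ∀ (m : ℕ),
      (∀ k : ℕ, k ≤ m →
        Real.exp (-(birkJ φm X w k)) * z ∈ Set.Ioo (-ε) ε ∧
        X (Lshift^[k] w) + H (Lshift^[k] w) (Real.exp (-(birkJ φm X w k)) * z) ∈
          I (w.1 (k : ℤ))) →
      Lcomp h 𝒱 φm w.1 m φfun
          (X (Lshift^[m] w) + H (Lshift^[m] w) (Real.exp (-(birkJ φm X w m)) * z)) =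
        Complex.exp (Complex.I / (h : ℂ) *
            ∑ k ∈ Finset.range m, 𝒱 (compFwdZ φm w.1 (k + 1) (X w))) *
          (Complex.exp (Complex.I / (h : ℂ) * Υ (Lshift^[m] w)
              (X (Lshift^[m] w) + H (Lshift^[m] w) (Real.exp (-(birkJ φm X w m)) * z))) *
            (Complex.exp (-(Complex.I / (h : ℂ)) * Υ w (X w + H w z)) *
              φfun (X w + H w z))) := by
    intro m
    induction m with
    | zero =>
      intro _
      have hJ0 : birkJ φm X w 0 = 0 := by
        unfold birkJ
        show -Real.log (deriv id (X w)) = 0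
        simp
      rw [hJ0]
      simp only [Function.iterate_zero_apply, neg_zero, Real.exp_zero, one_mul,
        Finset.range_zero, Finset.sum_empty, mul_zero, Complex.exp_zero]
      show φfun (X w + H w z) = _
      rw [← mul_assoc, ← Complex.exp_add]
      have h0 : Complex.I / (h : ℂ) * Υ w (X w + H w z) +
          -(Complex.I / (h : ℂ)) * Υ w (X w + H w z) = 0 := by ring
      rw [h0, Complex.exp_zero, one_mul]
    | succ m ih =>
      intro hyp'
      have hyp'' : ∀ k : ℕ, k ≤ m →
          Real.exp (-(birkJ φm X w k)) * z ∈ Set.Ioo (-ε) ε ∧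
          X (Lshift^[k] w) + H (Lshift^[k] w) (Real.exp (-(birkJ φm X w k)) * z) ∈
            I (w.1 (k : ℤ)) := fun k hk => hyp' k (Nat.le_succ_of_le hk)
      set w' := Lshift^[m] w with hw'
      set zm := Real.exp (-(birkJ φm X w m)) * z with hzm
      have hzmIoo : zm ∈ Set.Ioo (-ε) ε := (hyp' m (Nat.le_succ m)).1
      have hymem : X w' + H w' zm ∈ I (w'.1 0) := by
        rw [L1, zero_add]
        exact (hyp' m (Nat.le_succ m)).2
      -- the conjugacy step
      have hidx0 : w'.1 0 = w.1 (m : ℤ) := by rw [L1, zero_add]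
      have hidx1 : w'.1 1 = w.1 ((m : ℤ) + 1) := by rw [L1, add_comm]
      have hzstep : Real.exp (-(birkJ φm X w' 1)) * zm =
          Real.exp (-(birkJ φm X w (m + 1))) * z := by
        rw [hzm, stepJ m, mul_assoc]
      have key : X (Lshift^[m + 1] w) +
          H (Lshift^[m + 1] w) (Real.exp (-(birkJ φm X w (m + 1))) * z) =
          φm (w.1 (m : ℤ)) (w.1 ((m : ℤ) + 1)) (X w' + H w' zm) := by
        have hc := hconj w' zm hzmIoo
        rw [hzstep, add_comm (H w' zm) (X w')] at hc
        rw [Function.iterate_succ_apply', ← hw', hc, hidx0, hidx1]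
        ring
      have hinjm := hinj _ _ (w.2 (m : ℤ))
      -- evaluate the new transfer-operator layer
      show Lop h 𝒱 (φm (w.1 (m : ℤ)) (w.1 ((m : ℤ) + 1))) (Lcomp h 𝒱 φm w.1 m φfun)
          (X (Lshift^[m + 1] w) +
            H (Lshift^[m + 1] w) (Real.exp (-(birkJ φm X w (m + 1))) * z)) = _
      rw [key]
      unfold Lop
      rw [Function.leftInverse_invFun hinjm, ih hyp'']
      -- homological equation
      have hhom := hΥhom w' (X w' + H w' zm) hymem
      rw [hidx0, hidx1] at hhom
      have hXs : X (Lshift w') = X (Lshift^[m + 1] w) := by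
        rw [Function.iterate_succ_apply', hw']
      have hLs : Υ (Lshift w') = Υ (Lshift^[m + 1] w) := by
        rw [Function.iterate_succ_apply', hw']
      rw [hXs, hLs] at hhom
      rw [← key] at hhom
      rw [Finset.sum_range_succ, ← L2 w (m + 1)]
      rw [key] at hhom
      rw [hhom]
      simp only [← mul_assoc, ← Complex.exp_add]
      congr 2
      ring
  -- reduce the statement to `main`
  have hmem := hyp n le_rfl
  rw [main n hyp]
  unfold Tfio Dil TfioInv
  rw [add_sub_cancel_left, hHinv _ _ hmem.1]
  have hz : Real.exp (birkJ φm X w n) * (Real.exp (-(birkJ φm X w n)) * z) = z := by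
    rw [← mul_assoc, ← Real.exp_add]
    simp
  rw [hz]
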